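/- arXiv:1609.03772 — 5 statements merged into one kernel-verified Lean document; each statement's English description precedes it below -/
import Mathlib

section
/- Let C be positive definite with A ⊆ B sets of indices not containing r. Then the conditional variance of coordinate r given coordinates in B is at most the conditional variance given coordinates in A: C_{rr} − C_{r,B}(C_{B,B})⁻¹C_{B,r} ≤ C_{rr} − C_{r,A}(C_{A,A})⁻¹C_{A,r}. -/
open Matrix

section aux

variable {n : Type*} [Fintype n] [DecidableEq n]

private lemma posdef_transpose_eq (M : Matrix n n ℝ) (hM : M.PosDef) : Mᵀ = M := by
  simpa using hM.isHermitian.eq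

private lemma key_ineq (M : Matrix n n ℝ) (hM : M.PosDef) (v w : n → ℝ) :
    2 * (w ⬝ᵥ v) - w ⬝ᵥ M.mulVec w ≤ v ⬝ᵥ M⁻¹.mulVec v := by
  have hMM : M * M⁻¹ = 1 := mul_nonsing_inv M (isUnit_iff_ne_zero.2 hM.det_pos.ne')
  have hMs : Mᵀ = M := posdef_transpose_eq M hM
  set u₀ : n → ℝ := M⁻¹.mulVec v with hu₀
  have h1 : M.mulVec u₀ = v := by
    rw [hu₀, mulVec_mulVec, hMM, one_mulVec]
  have h0 : 0 ≤ (w - u₀) ⬝ᵥ M.mulVec (w - u₀) := by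
    simpa using hM.posSemidef.dotProduct_mulVec_nonneg (w - u₀)
  rw [mulVec_sub, sub_dotProduct, dotProduct_sub, dotProduct_sub] at h0
  have e1 : w ⬝ᵥ M.mulVec u₀ = w ⬝ᵥ v := by rw [h1]
  have e2 : u₀ ⬝ᵥ M.mulVec w = w ⬝ᵥ v := by
    rw [dotProduct_mulVec, ← mulVec_transpose, hMs, h1, dotProduct_comm]
  have e3 : u₀ ⬝ᵥ M.mulVec u₀ = v ⬝ᵥ M⁻¹.mulVec v := by
    rw [h1, hu₀, dotProduct_comm]
  rw [e1, e2, e3] at h0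
  linarith

private lemma key_eq (M : Matrix n n ℝ) (hM : M.PosDef) (v : n → ℝ) :
    v ⬝ᵥ M⁻¹.mulVec v
      = 2 * ((M⁻¹.mulVec v) ⬝ᵥ v) - (M⁻¹.mulVec v) ⬝ᵥ M.mulVec (M⁻¹.mulVec v) := by
  have hMM : M * M⁻¹ = 1 := mul_nonsing_inv M (isUnit_iff_ne_zero.2 hM.det_pos.ne')
  have h1 : M.mulVec (M⁻¹.mulVec v) = v := by
    rw [mulVec_mulVec, hMM, one_mulVec]
  rw [h1, dotProduct_comm]
  ring

end aux

private lemma transfer_sum {m : ℕ} (A B : Finset (Fin m)) (hAB : A ⊆ B)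
    (f : Fin m → ℝ) (hf : ∀ i ∈ B, i ∉ A → f i = 0) :
    ∑ i : B, f i = ∑ i : A, f i := by
  rw [Finset.sum_coe_sort, Finset.sum_coe_sort]
  exact (Finset.sum_subset hAB hf).symm

private lemma transfer_sum_univ {m : ℕ} (A : Finset (Fin m))
    (f : Fin m → ℝ) (hf : ∀ i ∉ A, f i = 0) :
    ∑ i, f i = ∑ i : A, f i := by
  rw [Finset.sum_coe_sort]
  exact (Finset.sum_subset (Finset.subset_univ A) fun i _ hi => hf i hi).symm

private lemma posdef_of_submatrix {m : ℕ} (C : Matrix (Fin m) (Fin m) ℝ)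
    (hC : C.PosDef) (S : Finset (Fin m)) :
    (Matrix.of fun i j : S => C i j).PosDef := by
  rw [posDef_iff_dotProduct_mulVec]
  constructor
  · exact hC.1.submatrix Subtype.val
  · intro x hx
    set y : Fin m → ℝ := fun k => if h : k ∈ S then x ⟨k, h⟩ else 0 with hy
    have hy0 : ∀ k ∉ S, y k = 0 := fun k hk => by simp [hy, hk]
    have hyx : ∀ i : S, y ↑i = x i := fun i => by simp [hy, i.2]
    have hyne : y ≠ 0 := by
      intro h
      apply hx
      funext i
      have h2 := congrFun h (↑i : Fin m)
      rw [hyx i] at h2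
      exact h2
    have key := hC.dotProduct_mulVec_pos hyne
    have heq : star y ⬝ᵥ C.mulVec y
        = star x ⬝ᵥ (Matrix.of fun i j : S => C i j).mulVec x := by
      simp only [dotProduct, mulVec, Finset.mul_sum, Pi.star_apply, star_trivial,
        Matrix.of_apply]
      calc ∑ i, ∑ j, y i * (C i j * y j)
          = ∑ i, ∑ j : S, y i * (C i ↑j * y ↑j) := by
            refine Finset.sum_congr rfl fun i _ => ?_
            exact (transfer_sum_univ S (fun j => y i * (C i j * y j))
              (fun j hj => by simp [hy0 j hj])).symm ▸ rfl
        _ = ∑ i : S, ∑ j : S, y ↑i * (C ↑i ↑j * y ↑j) :=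
            transfer_sum_univ S (fun i => ∑ j : S, y i * (C i ↑j * y ↑j))
              (fun i hi => by simp [hy0 i hi])
        _ = ∑ i : S, ∑ j : S, x i * (C ↑i ↑j * x j) := by
            refine Finset.sum_congr rfl fun i _ => Finset.sum_congr rfl fun j _ => ?_
            rw [hyx i, hyx j]
    rw [← heq]
    exact key

/-- Monotonicity of the conditional variance (Schur complement): conditioning on a
larger index set `B ⊇ A` cannot increase the conditional variance of coordinate `r`. -/
theorem schur_complement_antitone {m : ℕ}
    (C : Matrix (Fin m) (Fin m) ℝ) (hC : C.PosDef)
    (r : Fin m) (A B : Finset (Fin m)) (hAB : A ⊆ B) (hrB : r ∉ B) :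
    C r r - ∑ i : B, ∑ j : B,
        C r i * ((Matrix.of fun i j : B => C i j)⁻¹ i j) * C j r
      ≤ C r r - ∑ i : A, ∑ j : A,
          C r i * ((Matrix.of fun i j : A => C i j)⁻¹ i j) * C j r := by
  have hCs : Cᵀ = C := posdef_transpose_eq C hC
  have hsym : ∀ i j, C j i = C i j := fun i j => congrFun (congrFun hCs i) j
  set MB : Matrix B B ℝ := Matrix.of fun i j : B => C i j with hMBdef
  set MA : Matrix A A ℝ := Matrix.of fun i j : A => C i j with hMAdef
  have hMB : MB.PosDef := posdef_of_submatrix C hC B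
  have hMA : MA.PosDef := posdef_of_submatrix C hC A
  set vB : B → ℝ := fun i => C i r with hvB
  set vA : A → ℝ := fun i => C i r with hvA
  have hsumB : (∑ i : B, ∑ j : B, C r i * (MB⁻¹ i j) * C j r) = vB ⬝ᵥ MB⁻¹.mulVec vB := by
    simp only [dotProduct, mulVec, Finset.mul_sum, hvB]
    refine Finset.sum_congr rfl fun i _ => Finset.sum_congr rfl fun j _ => ?_
    rw [hsym (i : Fin m) r]
    ring
  have hsumA : (∑ i : A, ∑ j : A, C r i * (MA⁻¹ i j) * C j r) = vA ⬝ᵥ MA⁻¹.mulVec vA := by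
    simp only [dotProduct, mulVec, Finset.mul_sum, hvA]
    refine Finset.sum_congr rfl fun i _ => Finset.sum_congr rfl fun j _ => ?_
    rw [hsym (i : Fin m) r]
    ring
  rw [hsumB, hsumA]
  refine sub_le_sub_left ?_ _
  set wA : A → ℝ := MA⁻¹.mulVec vA with hwA
  set w : Fin m → ℝ := fun i => if h : i ∈ A then wA ⟨i, h⟩ else 0 with hw
  have hw0 : ∀ i, i ∉ A → w i = 0 := by
    intro i hi; simp [hw, hi]
  have hwA' : ∀ i : A, w (i : Fin m) = wA i := by
    intro i; simp [hw, i.2]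
  set wB : B → ℝ := fun i => w (i : Fin m) with hwB
  have ha : wB ⬝ᵥ vB = wA ⬝ᵥ vA := by
    simp only [dotProduct, hwB, hvB, hvA]
    calc ∑ i : B, w ↑i * C ↑i r
        = ∑ i : A, w ↑i * C ↑i r :=
          transfer_sum A B hAB (fun i => w i * C i r)
            (fun i _ hi => by simp [hw0 i hi])
      _ = ∑ i : A, wA i * C ↑i r := by
          refine Finset.sum_congr rfl fun i _ => ?_
          rw [hwA' i]
  have hb : wB ⬝ᵥ MB.mulVec wB = wA ⬝ᵥ MA.mulVec wA := by
    have lhs : wB ⬝ᵥ MB.mulVec wB = ∑ i : B, ∑ j : B, w ↑i * (C ↑i ↑j * w ↑j) := by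
      simp only [dotProduct, mulVec, Finset.mul_sum, hwB, hMBdef, Matrix.of_apply]
    have rhs : wA ⬝ᵥ MA.mulVec wA = ∑ i : A, ∑ j : A, w ↑i * (C ↑i ↑j * w ↑j) := by
      simp only [dotProduct, mulVec, Finset.mul_sum, hMAdef, Matrix.of_apply]
      refine Finset.sum_congr rfl fun i _ => Finset.sum_congr rfl fun j _ => ?_
      rw [hwA' i, hwA' j]
    rw [lhs, rhs]
    calc ∑ i : B, ∑ j : B, w ↑i * (C ↑i ↑j * w ↑j)
        = ∑ i : B, ∑ j : A, w ↑i * (C ↑i ↑j * w ↑j) := by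
          refine Finset.sum_congr rfl fun i _ => ?_
          exact transfer_sum A B hAB (fun j => w ↑i * (C ↑i j * w j))
            (fun j _ hj => by simp [hw0 j hj])
      _ = ∑ i : A, ∑ j : A, w ↑i * (C ↑i ↑j * w ↑j) :=
          transfer_sum A B hAB (fun i => ∑ j : A, w i * (C i ↑j * w ↑j))
            (fun i _ hi => by simp [hw0 i hi])
  calc vA ⬝ᵥ MA⁻¹.mulVec vA
      = 2 * (wA ⬝ᵥ vA) - wA ⬝ᵥ MA.mulVec wA := key_eq MA hMA vA
    _ = 2 * (wB ⬝ᵥ vB) - wB ⬝ᵥ MB.mulVec wB := by rw [ha, hb]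
    _ ≤ vB ⬝ᵥ MB⁻¹.mulVec vB := key_ineq MB hMB vB wB
end

section
/- Let x[1],...,x[N] be independent zero-mean Gaussian vectors in ℝ^d with positive definite covariances C[n] and precision matrices K[n] = (C[n])⁻¹, with eigenvalue lower bounds λ_min(C[n]) ≥ α[n] > 0. Define the neighborhood N(r) = { t ≠ r : (K[n])_{r,t} ≠ 0 for some n } and the conditional variance V(r|T) = (1/N) Σ_n 1/(((C[n])_{T∪{r},T∪{r}})⁻¹)_{r,r}. If T ⊆ {1,...,d}\{r} satisfies N(r)\T ≠ ∅, pick j ∈ N(r)\T; then V(r|T) ≥ (1/N) Σ_{n=1}^N α[n] ((K[n])_{r,j}/(K[n])_{r,r})² + (1/N) Σ_{n=1}^N 1/(K[n])_{r,r}. -/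
open Matrix

private lemma myDiagPos {m : Type*} [Fintype m] [DecidableEq m]
    {M : Matrix m m ℝ} (hM : M.PosDef) (i : m) : 0 < M i i := by
  have h := hM.dotProduct_mulVec_pos (x := Pi.single i 1) (by
    intro h
    have := congrFun h i
    simp at this)
  simpa [dotProduct, mulVec, Pi.single_apply, Finset.sum_ite_eq, mul_ite] using h

private lemma extendDot {d : ℕ} (S : Finset (Fin d)) (M : Matrix (Fin d) (Fin d) ℝ)
    (x : S → ℝ) :
    (fun i => if h : i ∈ S then x ⟨i, h⟩ else 0) ⬝ᵥ
      (M *ᵥ fun i => if h : i ∈ S then x ⟨i, h⟩ else 0)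
    = x ⬝ᵥ ((M.submatrix (Subtype.val : S → Fin d) Subtype.val) *ᵥ x) := by
  have key : ∀ g : Fin d → ℝ,
      (∑ i, (if h : i ∈ S then x ⟨i, h⟩ else 0) * g i) = ∑ i : S, x i * g i := by
    intro g
    rw [show (∑ i, (if h : i ∈ S then x ⟨i, h⟩ else 0) * g i)
        = ∑ i ∈ S, (if h : i ∈ S then x ⟨i, h⟩ else 0) * g i from
      (Finset.sum_subset (Finset.subset_univ S)
        (by intro i _ hi; simp [hi])).symm]
    rw [← Finset.sum_coe_sort]
    exact Finset.sum_congr rfl fun i _ => by simp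
  simp only [dotProduct, mulVec, Matrix.submatrix_apply]
  rw [key]
  refine Finset.sum_congr rfl fun i _ => ?_
  congr 1
  calc ∑ k, M (↑i) k * (if h : k ∈ S then x ⟨k, h⟩ else 0)
      = ∑ k, (if h : k ∈ S then x ⟨k, h⟩ else 0) * M (↑i) k := by
        exact Finset.sum_congr rfl fun k _ => mul_comm _ _
    _ = ∑ k : S, x k * M (↑i) (↑k) := key _
    _ = ∑ k : S, M (↑i) (↑k) * x k := Finset.sum_congr rfl fun k _ => mul_comm _ _

private lemma perMatrix {d : ℕ} (C : Matrix (Fin d) (Fin d) ℝ) (hC : C.PosDef)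
    (a : ℝ) (ha : 0 < a) (heig : (C - a • (1 : Matrix (Fin d) (Fin d) ℝ)).PosSemidef)
    (r j : Fin d) (T : Finset (Fin d)) (hrT : r ∉ T) (hjr : j ≠ r) (hjT : j ∉ T) :
    a * (C⁻¹ r j / C⁻¹ r r) ^ 2 + 1 / C⁻¹ r r ≤
      1 / ((Matrix.of fun i j' : (insert r T : Finset (Fin d)) => C i j')⁻¹
        ⟨r, Finset.mem_insert_self r T⟩ ⟨r, Finset.mem_insert_self r T⟩) := by
  classical
  set S : Finset (Fin d) := insert r T with hS
  set A : Matrix S S ℝ := Matrix.of fun i j' : S => C i j' with hA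
  have hAsub : A = C.submatrix (Subtype.val : S → Fin d) Subtype.val := rfl
  set r' : S := ⟨r, Finset.mem_insert_self r T⟩ with hr'
  -- A is positive definite
  have hApd : A.PosDef := by
    refine Matrix.PosDef.of_dotProduct_mulVec_pos (hAsub ▸ hC.isHermitian.submatrix _) fun x hx => ?_
    have hy : (fun i => if h : i ∈ S then x ⟨i, h⟩ else 0) ≠ 0 := by
      obtain ⟨i, hi⟩ := Function.ne_iff.mp hx
      intro h
      have := congrFun h (i : Fin d)
      simp at this
      exact hi this
    have := hC.dotProduct_mulVec_pos hy
    rw [show (star (fun i => if h : i ∈ S then x ⟨i, h⟩ else 0) : Fin d → ℝ)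
        = fun i => if h : i ∈ S then x ⟨i, h⟩ else 0 from rfl] at this
    rw [extendDot] at this
    simpa [hAsub] using this
  have hAinv : A⁻¹.PosDef := hApd.inv
  have hcpos : 0 < A⁻¹ r' r' := myDiagPos hAinv r'
  have hcne : A⁻¹ r' r' ≠ 0 := ne_of_gt hcpos
  have hKpd : C⁻¹.PosDef := hC.inv
  have hKrr : 0 < C⁻¹ r r := myDiagPos hKpd r
  have hKrrne : C⁻¹ r r ≠ 0 := ne_of_gt hKrr
  -- the optimal coefficient vector on S
  set u : S → ℝ := fun i => A⁻¹ i r' / A⁻¹ r' r' with hu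
  have hdetA : IsUnit A.det := hApd.det_pos.ne'.isUnit
  have hmulA : A *ᵥ (fun i => A⁻¹ i r') = fun i => (1 : Matrix S S ℝ) i r' := by
    funext i
    simp only [mulVec, dotProduct]
    rw [show (∑ k, A i k * A⁻¹ k r') = (A * A⁻¹) i r' from (Matrix.mul_apply).symm,
      Matrix.mul_nonsing_inv _ hdetA]
  have hur' : u r' = 1 := by simp [hu, div_self hcne]
  have hAu : A *ᵥ u = fun i => (1 : Matrix S S ℝ) i r' / A⁻¹ r' r' := by
    have : u = (A⁻¹ r' r')⁻¹ • (fun i => A⁻¹ i r') := by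
      funext i; simp [hu, div_eq_inv_mul, mul_comm]
    rw [this, Matrix.mulVec_smul, hmulA]
    funext i
    simp [div_eq_inv_mul]
  have hquad : u ⬝ᵥ (A *ᵥ u) = 1 / A⁻¹ r' r' := by
    rw [hAu]
    simp only [dotProduct, Matrix.one_apply]
    rw [Finset.sum_eq_single r']
    · simp [hur']
    · intro b _ hb; simp [hb]
    · intro h; exact absurd (Finset.mem_univ r') h
  -- extend u by zero to the full space
  set v : Fin d → ℝ := fun i => if h : i ∈ S then u ⟨i, h⟩ else 0 with hv
  have hvr : v r = 1 := by
    simp only [hv]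
    rw [dif_pos (Finset.mem_insert_self r T)]
    exact hur'
  have hjS : j ∉ S := by simp [hS, hjr, hjT]
  have hvj : v j = 0 := by simp [hv, hjS]
  have hQv : v ⬝ᵥ (C *ᵥ v) = 1 / A⁻¹ r' r' := by
    rw [hv, extendDot, ← hAsub, hquad]
  -- the regression coefficient vector
  set β : Fin d → ℝ := fun i => C⁻¹ r i / C⁻¹ r r with hβ
  have hKsym : ∀ i k : Fin d, C⁻¹ i k = C⁻¹ k i := by
    intro i k
    have := congrFun (congrFun hKpd.isHermitian.eq i) k
    simpa using this.symm
  have hdetC : IsUnit C.det := hC.det_pos.ne'.isUnit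
  have hCβ : C *ᵥ β = fun i => (1 : Matrix (Fin d) (Fin d) ℝ) i r / C⁻¹ r r := by
    funext i
    simp only [mulVec, dotProduct, hβ]
    rw [show (∑ k, C i k * (C⁻¹ r k / C⁻¹ r r))
        = (∑ k, C i k * C⁻¹ k r) / C⁻¹ r r by
      rw [Finset.sum_div]
      exact Finset.sum_congr rfl fun k _ => by rw [hKsym r k, mul_div_assoc]]
    rw [show (∑ k, C i k * C⁻¹ k r) = (C * C⁻¹) i r from (Matrix.mul_apply).symm,
      Matrix.mul_nonsing_inv _ hdetC]
  have hdotCβ : ∀ x : Fin d → ℝ, x ⬝ᵥ (C *ᵥ β) = x r / C⁻¹ r r := by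
    intro x
    rw [hCβ]
    simp only [dotProduct, Matrix.one_apply]
    rw [Finset.sum_eq_single r]
    · simp [div_eq_mul_inv]
    · intro b _ hb; simp [hb]
    · intro h; exact absurd (Finset.mem_univ r) h
  set w : Fin d → ℝ := v - β with hw
  have hwr : w r = 0 := by simp [hw, hvr, hβ, div_self hKrrne]
  have hwj : w j = -(C⁻¹ r j / C⁻¹ r r) := by simp [hw, hvj, hβ]
  -- decompose the quadratic form
  have hCsym : Cᵀ = C := hC.isHermitian.eq
  have hβCw : β ⬝ᵥ (C *ᵥ w) = 0 := by
    rw [Matrix.dotProduct_mulVec, ← Matrix.mulVec_transpose, hCsym,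
      dotProduct_comm, hdotCβ, hwr, zero_div]
  have hwCβ : w ⬝ᵥ (C *ᵥ β) = 0 := by rw [hdotCβ, hwr, zero_div]
  have hβCβ : β ⬝ᵥ (C *ᵥ β) = 1 / C⁻¹ r r := by
    rw [hdotCβ]
    simp [hβ, div_self hKrrne]
  have hsplit : v ⬝ᵥ (C *ᵥ v)
      = 1 / C⁻¹ r r + w ⬝ᵥ (C *ᵥ w) := by
    have hveq : v = β + w := by simp [hw]
    rw [hveq, Matrix.mulVec_add, dotProduct_add, add_dotProduct, add_dotProduct,
      hβCβ, hβCw, hwCβ]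
    ring
  -- lower bound on the remainder term
  have hwq : a * (C⁻¹ r j / C⁻¹ r r) ^ 2 ≤ w ⬝ᵥ (C *ᵥ w) := by
    have h1 := heig.dotProduct_mulVec_nonneg w
    have h2 : (star w : Fin d → ℝ) = w := rfl
    rw [h2, Matrix.sub_mulVec, dotProduct_sub, Matrix.smul_mulVec,
      Matrix.one_mulVec, dotProduct_smul, sub_nonneg] at h1
    have h3 : w j ^ 2 ≤ w ⬝ᵥ w := by
      simp only [dotProduct]
      rw [show w j ^ 2 = w j * w j from sq (w j) ▸ rfl]
      refine Finset.single_le_sum (f := fun i => w i * w i)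
        (fun i _ => mul_self_nonneg _) (Finset.mem_univ j)
    calc a * (C⁻¹ r j / C⁻¹ r r) ^ 2 = a * (w j) ^ 2 := by rw [hwj]; ring
      _ ≤ a * (w ⬝ᵥ w) := by
          exact mul_le_mul_of_nonneg_left h3 (le_of_lt ha)
      _ = a • (w ⬝ᵥ w) := rfl
      _ ≤ w ⬝ᵥ (C *ᵥ w) := h1
  -- combine
  calc a * (C⁻¹ r j / C⁻¹ r r) ^ 2 + 1 / C⁻¹ r r
      ≤ w ⬝ᵥ (C *ᵥ w) + 1 / C⁻¹ r r := by linarith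
    _ = v ⬝ᵥ (C *ᵥ v) := by rw [hsplit]; ring
    _ = 1 / A⁻¹ r' r' := hQv

/-- Theorem 1, first case: if the conditioning set `T` misses a true neighbor
`j ∈ N(r) \ T`, then the conditional variance
`V(r|T) = (1/N) ∑ n, 1/(((C n)_{T∪{r},T∪{r}})⁻¹)_{r,r}` is inflated by at least the
partial-correlation term `(1/N) ∑ n, α n ((K n)_{r,j}/(K n)_{r,r})²` above the minimal
value `(1/N) ∑ n, 1/(K n)_{r,r}`. -/
theorem cond_variance_lower_bound_missing_neighbor {N d : ℕ} (hN : 0 < N)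
    (C K : Fin N → Matrix (Fin d) (Fin d) ℝ)
    (hC : ∀ n, (C n).PosDef) (hK : ∀ n, K n = (C n)⁻¹)
    (α : Fin N → ℝ) (hα : ∀ n, 0 < α n)
    (heig : ∀ n, (C n - α n • (1 : Matrix (Fin d) (Fin d) ℝ)).PosSemidef)
    (r j : Fin d) (T : Finset (Fin d)) (hrT : r ∉ T)
    (hjr : j ≠ r) (hjK : ∃ n, (K n) r j ≠ 0) (hjT : j ∉ T) :
    ((1 : ℝ) / N) * ∑ n,
        1 / ((Matrix.of fun i j' : (insert r T : Finset (Fin d)) => C n i j')⁻¹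
          ⟨r, Finset.mem_insert_self r T⟩ ⟨r, Finset.mem_insert_self r T⟩)
      ≥ ((1 : ℝ) / N) * (∑ n, α n * ((K n) r j / (K n) r r) ^ 2)
        + ((1 : ℝ) / N) * ∑ n, 1 / (K n) r r := by
  have hsum : ∀ n : Fin N,
      α n * ((K n) r j / (K n) r r) ^ 2 + 1 / (K n) r r ≤
        1 / ((Matrix.of fun i j' : (insert r T : Finset (Fin d)) => C n i j')⁻¹
          ⟨r, Finset.mem_insert_self r T⟩ ⟨r, Finset.mem_insert_self r T⟩) := by
    intro n
    rw [hK n]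
    exact perMatrix (C n) (hC n) (α n) (hα n) (heig n) r j T hrT hjr hjT
  have hNpos : (0 : ℝ) ≤ 1 / N := by positivity
  rw [ge_iff_le, ← mul_add, ← Finset.sum_add_distrib]
  exact mul_le_mul_of_nonneg_left (Finset.sum_le_sum fun n _ => hsum n) hNpos
end

section
/- Let x[1],...,x[N] be independent zero-mean Gaussian vectors in ℝ^d with positive definite covariances C[n] and precisions K[n]. With N(r) = { t ≠ r : (K[n])_{r,t} ≠ 0 for some n } and V(r|T) = (1/N) Σ_n 1/(((C[n])_{T∪{r},T∪{r}})⁻¹)_{r,r}, one has V(r|T) = (1/N) Σ_{n=1}^N 1/(K[n])_{r,r} whenever N(r) ⊆ T. -/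
open Matrix

private lemma sum_extend_dite {ι M : Type*} [Fintype ι] [DecidableEq ι] [AddCommMonoid M]
    (S : Finset ι) (g : S → M) :
    ∑ i, (if h : i ∈ S then g ⟨i, h⟩ else 0) = ∑ i : S, g i := by
  rw [← Finset.sum_subset (Finset.subset_univ S) (fun i _ hi => by simp [hi])]
  rw [← Finset.sum_attach S (fun i => if h : i ∈ S then g ⟨i, h⟩ else 0)]
  exact Finset.sum_congr rfl fun i _ => by simp

private lemma posdef_submatrix {d : ℕ} {M : Matrix (Fin d) (Fin d) ℝ} (hM : M.PosDef)
    (S : Finset (Fin d)) : (M.submatrix ((↑) : S → Fin d) (↑)).PosDef := by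
  refine Matrix.PosDef.of_dotProduct_mulVec_pos (hM.1.submatrix _) fun x hx => ?_
  set y : Fin d → ℝ := fun j => if h : j ∈ S then x ⟨j, h⟩ else 0 with hy
  have hy0 : y ≠ 0 := by
    obtain ⟨i, hi⟩ := Function.ne_iff.1 hx
    exact Function.ne_iff.2 ⟨i, by simpa [hy, i.2] using hi⟩
  have key : dotProduct (star y) (M *ᵥ y) =
      dotProduct (star x) ((M.submatrix ((↑) : S → Fin d) (↑)) *ᵥ x) := by
    simp only [dotProduct, mulVec, star, Pi.star_apply, star_trivial, id_eq]
    rw [← sum_extend_dite S (fun i : S => x i * ∑ j : S, M.submatrix (↑) (↑) i j * x j)]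
    refine Finset.sum_congr rfl fun i _ => ?_
    by_cases hi : i ∈ S
    · simp only [hy, dif_pos hi]
      congr 1
      simp only [Matrix.submatrix_apply]
      rw [← sum_extend_dite S (fun j : S => M i (j : Fin d) * x j)]
      refine Finset.sum_congr rfl fun j _ => ?_
      by_cases hj : j ∈ S <;> simp [hj]
    · simp [hy, dif_neg hi]
  rw [← key]
  exact hM.dotProduct_mulVec_pos hy0

/-- Theorem 1, second case: if the conditioning set `T` contains the neighborhood
`N(r) = {t ≠ r : (K n)_{r,t} ≠ 0 for some n}`, then
`V(r|T) = (1/N) ∑ n, 1/(((C n)_{T∪{r},T∪{r}})⁻¹)_{r,r} = (1/N) ∑ n, 1/(K n)_{r,r}`. -/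
theorem cond_variance_superset_neighborhood_process {N d : ℕ} (hN : 0 < N)
    (C K : Fin N → Matrix (Fin d) (Fin d) ℝ)
    (hC : ∀ n, (C n).PosDef) (hK : ∀ n, K n = (C n)⁻¹)
    (r : Fin d) (T : Finset (Fin d)) (hrT : r ∉ T)
    (hNT : ∀ t, t ≠ r → (∃ n, (K n) r t ≠ 0) → t ∈ T) :
    ((1 : ℝ) / N) * ∑ n,
        1 / ((Matrix.of fun i j : (insert r T : Finset (Fin d)) => C n i j)⁻¹
          ⟨r, Finset.mem_insert_self r T⟩ ⟨r, Finset.mem_insert_self r T⟩)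
      = ((1 : ℝ) / N) * ∑ n, 1 / (K n) r r := by
  set S : Finset (Fin d) := insert r T with hS
  set r' : S := ⟨r, Finset.mem_insert_self r T⟩ with hr'
  congr 1
  refine Finset.sum_congr rfl fun n _ => ?_
  congr 1
  -- key claim : ((C n) submatrix on S)⁻¹ at (r,r) equals (K n) r r
  set A : Matrix S S ℝ := (C n).submatrix ((↑) : S → Fin d) (↑) with hA
  have hAeq : (Matrix.of fun i j : S => C n i j) = A := rfl
  rw [hAeq]
  have hCn := hC n
  have hApd : A.PosDef := posdef_submatrix hCn S
  have hKsymm : ∀ i j, K n i j = K n j i := by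
    intro i j
    have := ((hCn.1.inv).apply j i)
    rw [← hK n] at this
    simpa using this
  have hmul : C n * K n = 1 := by
    rw [hK n]
    exact Matrix.mul_nonsing_inv _ (isUnit_iff_ne_zero.2 hCn.det_pos.ne')
  -- K n j r = 0 for j ∉ S
  have hKzero : ∀ j : Fin d, j ∉ S → K n j r = 0 := by
    intro j hj
    have hjr : j ≠ r := fun h => hj (h ▸ Finset.mem_insert_self r T)
    have hjT : j ∉ T := fun h => hj (Finset.mem_insert_of_mem h)
    by_contra h
    exact hjT (hNT j hjr ⟨n, by rwa [hKsymm r j]⟩)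
  set v : S → ℝ := fun i => K n i r with hv
  have hAv : A *ᵥ v = Pi.single r' 1 := by
    funext i
    have : (A *ᵥ v) i = ∑ j : S, C n i j * K n j r := by
      simp [Matrix.mulVec, dotProduct, hA, hv]
    rw [this, ← sum_extend_dite S (fun j : S => C n i j * K n j r)]
    have : ∑ j, (if h : j ∈ S then C n i j * K n (⟨j, h⟩ : S) r else 0)
        = ∑ j, C n i j * K n j r := by
      refine Finset.sum_congr rfl fun j _ => ?_
      by_cases hj : j ∈ S
      · simp [hj]
      · simp [hj, hKzero j hj]
    rw [this]
    have hone : ∑ j, C n i j * K n j r = (C n * K n) i r := by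
      simp [Matrix.mul_apply]
    rw [hone, hmul]
    by_cases hir : i = r'
    · subst hir; simp [Matrix.one_apply, hr']
    · have : (i : Fin d) ≠ r := fun h => hir (Subtype.ext h)
      simp [Matrix.one_apply, this, Pi.single_apply, hir]
  have hinv : A⁻¹ * A = 1 :=
    Matrix.nonsing_inv_mul _ (isUnit_iff_ne_zero.2 hApd.det_pos.ne')
  have hveq : v = A⁻¹ *ᵥ Pi.single r' 1 := by
    rw [← hAv, Matrix.mulVec_mulVec, hinv, Matrix.one_mulVec]
  have : A⁻¹ r' r' = K n r r := by
    have := congrFun hveq r'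
    rw [Matrix.mulVec_single] at this
    simpa [hv] using this.symm
  rw [this]
end

section
/- Under the assumptions of the previous two statements, and additionally assuming the minimum partial correlation condition ρ_{a,b} ≥ ρ_min > 0 for all edges (a,b) (where ρ_{a,b} = (1/N) Σ_n α[n]((K[n])_{a,b}/(K[n])_{a,a})²) and |N(r)| ≤ s, the neighborhood N(r) is the unique minimizer over sets T ⊆ {1,...,d}\{r} with |T| ≤ s of the penalized conditional variance V(r|T) + ρ_min·|T|. -/
open Matrix
open scoped Classical

namespace NbhdAux

variable {ι : Type*} [Fintype ι] [DecidableEq ι]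

lemma posdef_quad {A : Matrix ι ι ℝ} (hA : A.PosDef) {x : ι → ℝ} (hx : x ≠ 0) :
    0 < x ⬝ᵥ A *ᵥ x := by
  simpa using hA.dotProduct_mulVec_pos hx

lemma possemidef_quad {A : Matrix ι ι ℝ} (hA : A.PosSemidef) (x : ι → ℝ) :
    0 ≤ x ⬝ᵥ A *ᵥ x := by
  simpa using hA.dotProduct_mulVec_nonneg x

lemma posdef_mul_inv {A : Matrix ι ι ℝ} (hA : A.PosDef) : A * A⁻¹ = 1 :=
  Matrix.mul_nonsing_inv _ hA.det_pos.ne'.isUnit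

lemma transpose_eq {A : Matrix ι ι ℝ} (hA : A.IsHermitian) : Aᵀ = A := by
  ext i j
  have := congrFun (congrFun hA i) j
  simpa [Matrix.conjTranspose_apply] using this

lemma herm_comm {A : Matrix ι ι ℝ} (hA : A.IsHermitian) (v w : ι → ℝ) :
    v ⬝ᵥ A *ᵥ w = w ⬝ᵥ A *ᵥ v :=
  calc v ⬝ᵥ A *ᵥ w = (v ᵥ* A) ⬝ᵥ w := Matrix.dotProduct_mulVec v A w
    _ = (A *ᵥ v) ⬝ᵥ w := by rw [← Matrix.vecMul_transpose, transpose_eq hA]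
    _ = w ⬝ᵥ (A *ᵥ v) := dotProduct_comm _ _

lemma mulVec_inv_col {A : Matrix ι ι ℝ} (hA : A.PosDef) (r : ι) :
    A *ᵥ (fun i => A⁻¹ i r) = Pi.single r 1 := by
  funext j
  have h := congrFun (congrFun (posdef_mul_inv hA) j) r
  simpa [Matrix.mulVec, dotProduct, Matrix.mul_apply, Matrix.one_apply,
    Pi.single_apply] using h

lemma inv_diag_pos {A : Matrix ι ι ℝ} (hA : A.PosDef) (r : ι) : 0 < A⁻¹ r r := by
  have h := posdef_quad hA.inv (x := Pi.single r 1)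
    (by intro h; simpa using congrFun h r)
  simpa [single_dotProduct, Matrix.mulVec, dotProduct,
    Pi.single_apply] using h

noncomputable def wm (A : Matrix ι ι ℝ) (r : ι) : ι → ℝ := fun i => A⁻¹ i r / A⁻¹ r r

lemma wm_r {A : Matrix ι ι ℝ} (hA : A.PosDef) (r : ι) : wm A r r = 1 :=
  div_self (inv_diag_pos hA r).ne'

lemma mulVec_wm {A : Matrix ι ι ℝ} (hA : A.PosDef) (r : ι) :
    A *ᵥ wm A r = (1 / A⁻¹ r r) • (Pi.single r 1 : ι → ℝ) := by
  have h : wm A r = (1 / A⁻¹ r r) • ((fun i => A⁻¹ i r) : ι → ℝ) := by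
    funext i
    simp only [wm, Pi.smul_apply, smul_eq_mul]
    ring
  rw [h, Matrix.mulVec_smul, mulVec_inv_col hA]

lemma quad_decomp {A : Matrix ι ι ℝ} (hA : A.PosDef) (r : ι) (x : ι → ℝ) (hx : x r = 1) :
    x ⬝ᵥ A *ᵥ x = 1 / A⁻¹ r r + (x - wm A r) ⬝ᵥ A *ᵥ (x - wm A r) := by
  set u := x - wm A r with hu
  have hur : u r = 0 := by simp [hu, hx, wm_r hA r]
  have hxu : x = u + wm A r := by rw [hu]; abel
  have hcross : u ⬝ᵥ A *ᵥ wm A r = 0 := by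
    rw [mulVec_wm hA r, dotProduct_smul]
    simp [dotProduct_single, hur]
  have hq : wm A r ⬝ᵥ A *ᵥ wm A r = 1 / A⁻¹ r r := by
    rw [mulVec_wm hA r, dotProduct_smul]
    simp [dotProduct_single, wm_r hA r]
  have hcross2 : wm A r ⬝ᵥ A *ᵥ u = 0 := by
    rw [herm_comm hA.isHermitian]; exact hcross
  calc x ⬝ᵥ A *ᵥ x = (u + wm A r) ⬝ᵥ A *ᵥ (u + wm A r) := by rw [← hxu]
    _ = u ⬝ᵥ A *ᵥ u + u ⬝ᵥ A *ᵥ wm A r + (wm A r ⬝ᵥ A *ᵥ u + wm A r ⬝ᵥ A *ᵥ wm A r) := by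
        rw [Matrix.mulVec_add, add_dotProduct, dotProduct_add,
          dotProduct_add]
    _ = 1 / A⁻¹ r r + u ⬝ᵥ A *ᵥ u := by rw [hcross, hcross2, hq]; ring

lemma quad_wm {A : Matrix ι ι ℝ} (hA : A.PosDef) (r : ι) :
    wm A r ⬝ᵥ A *ᵥ wm A r = 1 / A⁻¹ r r := by
  rw [mulVec_wm hA r, dotProduct_smul]
  simp [dotProduct_single, wm_r hA r]

lemma min_quad {A : Matrix ι ι ℝ} (hA : A.PosDef) (r : ι) (x : ι → ℝ) (hx : x r = 1) :
    1 / A⁻¹ r r ≤ x ⬝ᵥ A *ᵥ x := by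
  rw [quad_decomp hA r x hx]
  have := possemidef_quad hA.posSemidef (x - wm A r)
  linarith

noncomputable def extv (S : Finset ι) (x : ↥S → ℝ) : ι → ℝ :=
  fun i => if h : i ∈ S then x ⟨i, h⟩ else 0

def msub (S : Finset ι) (M : Matrix ι ι ℝ) : Matrix ↥S ↥S ℝ :=
  Matrix.of fun i j => M i j

lemma extv_coe (S : Finset ι) (x : ↥S → ℝ) (i : ↥S) : extv S x ↑i = x i := by
  simp [extv, i.2]

lemma extv_not_mem (S : Finset ι) (x : ↥S → ℝ) {i : ι} (h : i ∉ S) : extv S x i = 0 :=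
  dif_neg h

lemma sum_extv_mul (S : Finset ι) (x : ↥S → ℝ) (g : ι → ℝ) :
    ∑ i, extv S x i * g i = ∑ i : ↥S, x i * g ↑i := by
  rw [← Finset.sum_subset (Finset.subset_univ S)
    (fun i _ hi => by simp [extv_not_mem S x hi])]
  rw [← Finset.sum_coe_sort S (fun i => extv S x i * g i)]
  exact Finset.sum_congr rfl fun i _ => by rw [extv_coe]

lemma sum_mul_extv (S : Finset ι) (x : ↥S → ℝ) (g : ι → ℝ) :
    ∑ i, g i * extv S x i = ∑ i : ↥S, g ↑i * x i := by
  calc ∑ i, g i * extv S x i = ∑ i, extv S x i * g i := by simp_rw [mul_comm]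
    _ = ∑ i : ↥S, x i * g ↑i := sum_extv_mul S x g
    _ = ∑ i : ↥S, g ↑i * x i := by simp_rw [mul_comm]

lemma mulVec_extv (M : Matrix ι ι ℝ) (S : Finset ι) (x : ↥S → ℝ) (i : ι) :
    (M *ᵥ extv S x) i = ∑ j : ↥S, M i ↑j * x j := by
  simp only [Matrix.mulVec, dotProduct]
  exact sum_mul_extv S x (fun j => M i j)

lemma mulVec_extv_mem (M : Matrix ι ι ℝ) (S : Finset ι) (x : ↥S → ℝ) {i : ι} (h : i ∈ S) :
    (M *ᵥ extv S x) i = ((msub S M) *ᵥ x) ⟨i, h⟩ := by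
  rw [mulVec_extv]
  simp [msub, Matrix.mulVec, dotProduct]

lemma quad_extv (M : Matrix ι ι ℝ) (S : Finset ι) (x : ↥S → ℝ) :
    extv S x ⬝ᵥ (M *ᵥ extv S x) = x ⬝ᵥ ((msub S M) *ᵥ x) := by
  simp only [dotProduct]
  rw [sum_extv_mul S x (fun i => (M *ᵥ extv S x) i)]
  exact Finset.sum_congr rfl fun i _ => by rw [mulVec_extv_mem M S x i.2]

lemma posdef_msub {M : Matrix ι ι ℝ} (hM : M.PosDef) (S : Finset ι) :
    (msub S M).PosDef := by
  refine Matrix.PosDef.of_dotProduct_mulVec_pos ?_ ?_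
  · ext i j
    have := congrFun (congrFun hM.1 (i : ι)) (j : ι)
    simpa [msub, Matrix.conjTranspose_apply] using this
  · intro x hx
    have hx' : extv S x ≠ 0 := by
      obtain ⟨i, hi⟩ := Function.ne_iff.mp hx
      intro h0
      exact hi (by simpa [extv_coe] using congrFun h0 (i : ι))
    have h := hM.dotProduct_mulVec_pos hx'
    simp only [star_trivial] at h ⊢
    rwa [quad_extv] at h

end NbhdAux

open NbhdAux

/-- Under the minimum partial correlation condition and the sparsity bound `|N(r)| ≤ s`,
the neighborhood `N(r)` is the unique minimizer, over sets `T ⊆ {1,…,d}\{r}` with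
`|T| ≤ s`, of the penalized conditional variance `V(r|T) + ρ_min |T|`. -/
theorem neighborhood_unique_minimizer {N d : ℕ} (hN : 0 < N)
    (C K : Fin N → Matrix (Fin d) (Fin d) ℝ)
    (hC : ∀ n, (C n).PosDef) (hK : ∀ n, K n = (C n)⁻¹)
    (α : Fin N → ℝ) (hα : ∀ n, 0 < α n)
    (heig : ∀ n, (C n - α n • (1 : Matrix (Fin d) (Fin d) ℝ)).PosSemidef)
    (r : Fin d)
    (Nr : Finset (Fin d))
    (hNr : Nr = Finset.univ.filter (fun t => t ≠ r ∧ ∃ n, (K n) r t ≠ 0))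
    (s : ℕ) (hs : Nr.card ≤ s)
    (ρmin : ℝ) (hρmin : 0 < ρmin)
    (hpc : ∀ a b : Fin d, a ≠ b → (∃ n, (K n) a b ≠ 0) →
      ((1 : ℝ) / N) * ∑ n, α n * ((K n) a b / (K n) a a) ^ 2 ≥ ρmin)
    (V : Finset (Fin d) → ℝ)
    (hV : ∀ T : Finset (Fin d), r ∉ T →
      V T = ((1 : ℝ) / N) * ∑ n,
        1 / ((Matrix.of fun i j : (insert r T : Finset (Fin d)) => C n i j)⁻¹
          ⟨r, Finset.mem_insert_self r T⟩ ⟨r, Finset.mem_insert_self r T⟩)) :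
    ∀ T : Finset (Fin d), r ∉ T → T.card ≤ s → T ≠ Nr →
      V Nr + ρmin * Nr.card < V T + ρmin * T.card := by
  intro T hrT hTs hTne
  have hNpos : (0:ℝ) < 1 / N := by
    have : (0:ℝ) < N := by exact_mod_cast hN
    positivity
  have hKrr : ∀ n, 0 < K n r r := fun n => by rw [hK]; exact inv_diag_pos (hC n) r
  have hKrrC : ∀ n, (C n)⁻¹ r r = K n r r := fun n => by rw [hK]
  have hKsymm : ∀ n a b, K n a b = K n b a := by
    intro n a b
    have h : ((C n)⁻¹)ᵀ = (C n)⁻¹ := transpose_eq (hC n).isHermitian.inv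
    have := congrFun (congrFun h a) b
    rw [Matrix.transpose_apply] at this
    rw [hK]
    exact this.symm
  have hrNr : r ∉ Nr := by rw [hNr]; simp
  -- the "regression vector" onto the full neighborhood
  have hwst_eq : ∀ n, (fun i => K n r i / K n r r) = wm (C n) r := by
    intro n; funext i
    simp only [wm]
    rw [hKsymm n r i, hK]
  have hwst_supp : ∀ n i, i ∉ insert r Nr → K n r i / K n r r = 0 := by
    intro n i hi
    have hir : i ≠ r := fun h => hi (h ▸ Finset.mem_insert_self r Nr)
    have hiNr : i ∉ Nr := fun h => hi (Finset.mem_insert_of_mem h)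
    rw [hNr] at hiNr
    simp only [Finset.mem_filter, Finset.mem_univ, true_and, not_and, not_exists,
      not_not] at hiNr
    rw [hiNr hir n, zero_div]
  set vr : Fin N → Finset (Fin d) → ℝ := fun n T' =>
    1 / ((msub (insert r T') (C n))⁻¹ ⟨r, Finset.mem_insert_self r T'⟩
      ⟨r, Finset.mem_insert_self r T'⟩) with hvr
  have hVeq : ∀ T' : Finset (Fin d), r ∉ T' → V T' = (1/(N:ℝ)) * ∑ n, vr n T' :=
    fun T' h => hV T' h
  -- main per-sample inequality
  have main : ∀ (n : Fin N) (T' : Finset (Fin d)), r ∉ T' →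
      (1 / K n r r + α n * ∑ b ∈ Nr \ T', (K n r b / K n r r) ^ 2 ≤ vr n T') ∧
      (∀ b ∈ Nr \ T', K n r b ≠ 0 →
        1 / K n r r + α n * ∑ b ∈ Nr \ T', (K n r b / K n r r) ^ 2 < vr n T') := by
    intro n T' hrT'
    have hrS : r ∈ insert r T' := Finset.mem_insert_self r T'
    set S : Finset (Fin d) := insert r T' with hS
    set B : Matrix ↥S ↥S ℝ := msub S (C n) with hB
    have hBpd : B.PosDef := posdef_msub (hC n) S
    set rS : ↥S := ⟨r, hrS⟩ with hrSdef
    set w : Fin d → ℝ := extv S (wm B rS) with hw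
    have hwr : w r = 1 := by
      rw [hw]
      have h1 := extv_coe S (wm B rS) rS
      have h2 := wm_r hBpd rS
      simpa using h1.trans h2
    have hq : w ⬝ᵥ (C n *ᵥ w) = vr n T' := by
      rw [hw, quad_extv (C n) S (wm B rS), quad_wm hBpd rS]
    have hCwr : (C n *ᵥ w) r = vr n T' := by
      rw [hw, mulVec_extv_mem (C n) S _ hrS]
      have h1 := congrFun (mulVec_wm hBpd rS) rS
      rw [show (⟨r, hrS⟩ : ↥S) = rS from rfl, h1]
      simp only [Pi.smul_apply, Pi.single_eq_same, smul_eq_mul, mul_one]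
      rfl
    set u : Fin d → ℝ := w - wm (C n) r with hu
    have hdec : vr n T' = 1 / K n r r + u ⬝ᵥ (C n *ᵥ u) := by
      rw [← hq, quad_decomp (hC n) r w hwr, hKrrC n]
    have hur : u r = 0 := by simp [hu, hwr, wm_r (hC n) r]
    have hub : ∀ b ∈ Nr \ T', u b = -(K n r b / K n r r) := by
      intro b hb
      obtain ⟨hbNr, hbT⟩ := Finset.mem_sdiff.mp hb
      have hbr : b ≠ r := by
        rw [hNr] at hbNr; exact (Finset.mem_filter.mp hbNr).2.1
      have hbS : b ∉ S := by rw [hS]; simp [Finset.mem_insert, hbr, hbT]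
      have hwb : w b = 0 := extv_not_mem S _ hbS
      have hwmb : wm (C n) r b = K n r b / K n r r := by
        rw [← hwst_eq n]
      simp [hu, hwb, hwmb]
    have hexp : u ⬝ᵥ ((C n - α n • 1) *ᵥ u) = u ⬝ᵥ (C n *ᵥ u) - α n * (u ⬝ᵥ u) := by
      rw [Matrix.sub_mulVec, dotProduct_sub, Matrix.smul_mulVec,
        Matrix.one_mulVec, dotProduct_smul]
      simp [smul_eq_mul]
    have hqu : α n * (u ⬝ᵥ u) ≤ u ⬝ᵥ (C n *ᵥ u) := by
      have h0 := possemidef_quad (heig n) u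
      rw [hexp] at h0
      linarith
    have huu : ∑ b ∈ Nr \ T', (K n r b / K n r r) ^ 2 ≤ u ⬝ᵥ u := by
      calc ∑ b ∈ Nr \ T', (K n r b / K n r r) ^ 2
          = ∑ b ∈ Nr \ T', u b * u b := by
            refine Finset.sum_congr rfl fun b hb => ?_
            rw [hub b hb]; ring
        _ ≤ ∑ b, u b * u b := Finset.sum_le_sum_of_subset_of_nonneg
            (Finset.subset_univ _) (fun i _ _ => mul_self_nonneg _)
        _ = u ⬝ᵥ u := rfl
    have hle : 1 / K n r r + α n * ∑ b ∈ Nr \ T', (K n r b / K n r r) ^ 2 ≤ vr n T' := by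
      have h2 := mul_le_mul_of_nonneg_left huu (hα n).le
      rw [hdec]
      linarith
    refine ⟨hle, ?_⟩
    intro b hb hKb
    by_contra hcon
    push_neg at hcon
    have h2 := mul_le_mul_of_nonneg_left huu (hα n).le
    have he1 : u ⬝ᵥ (C n *ᵥ u) = α n * (u ⬝ᵥ u) := by
      rw [hdec] at hcon
      linarith
    have hker : (C n - α n • 1) *ᵥ u = 0 := by
      apply ((heig n).dotProduct_mulVec_zero_iff u).mp
      simp only [star_trivial]
      rw [hexp, he1]
      ring
    have hCu : C n *ᵥ u = α n • u := by
      rw [Matrix.sub_mulVec] at hker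
      have h3 := sub_eq_zero.mp hker
      rw [h3, Matrix.smul_mulVec, Matrix.one_mulVec]
    have hCur : (C n *ᵥ u) r = 0 := by
      rw [hCu]; simp [hur]
    have hCwst : (C n *ᵥ wm (C n) r) r = 1 / K n r r := by
      rw [mulVec_wm (hC n) r]
      simp [Pi.single_eq_same, hKrrC n]
    have hCur2 : (C n *ᵥ u) r = vr n T' - 1 / K n r r := by
      have h4 : C n *ᵥ u = C n *ᵥ w - C n *ᵥ wm (C n) r := by
        rw [hu, Matrix.mulVec_sub]
      rw [h4, Pi.sub_apply, hCwr, hCwst]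
    have hz : u ⬝ᵥ (C n *ᵥ u) = 0 := by
      rw [hCur] at hCur2
      linarith [hdec, hCur2]
    have hub' : u b ≠ 0 := by
      rw [hub b hb]
      exact neg_ne_zero.mpr (div_ne_zero hKb (hKrr n).ne')
    have hpos : 0 < u ⬝ᵥ u := by
      have h5 : 0 < u b * u b := mul_self_pos.mpr hub'
      have h6 : u b * u b ≤ ∑ i, u i * u i :=
        Finset.single_le_sum (f := fun i => u i * u i)
          (fun i _ => mul_self_nonneg _) (Finset.mem_univ b)
      have h7 : (∑ i, u i * u i) = u ⬝ᵥ u := rfl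
      linarith
    have h8 := mul_pos (hα n) hpos
    linarith
  -- value at the true neighborhood
  have hvrNr : ∀ n, vr n Nr = 1 / K n r r := by
    intro n
    refine le_antisymm ?_ ?_
    · have hrS : r ∈ insert r Nr := Finset.mem_insert_self r Nr
      set S : Finset (Fin d) := insert r Nr with hS
      have hBpd := posdef_msub (hC n) S
      set x : ↥S → ℝ := fun i => K n r ↑i / K n r r with hx
      have hxr : x ⟨r, hrS⟩ = 1 := by
        simp only [hx]
        exact div_self (hKrr n).ne'
      have hext : extv S x = fun i => K n r i / K n r r := by
        funext i
        by_cases hi : i ∈ S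
        · simp [extv, hi, hx]
        · rw [extv_not_mem S x hi, hwst_supp n i hi]
      have h1 := min_quad hBpd ⟨r, hrS⟩ x hxr
      have h2 : x ⬝ᵥ ((msub S (C n)) *ᵥ x)
          = (fun i => K n r i / K n r r) ⬝ᵥ (C n *ᵥ (fun i => K n r i / K n r r)) := by
        rw [← quad_extv (C n) S x, hext]
      have h3 : (fun i => K n r i / K n r r) ⬝ᵥ (C n *ᵥ (fun i => K n r i / K n r r))
          = 1 / K n r r := by
        rw [hwst_eq n, quad_wm (hC n) r, hKrrC n]
      calc vr n Nr = 1 / ((msub S (C n))⁻¹ ⟨r, hrS⟩ ⟨r, hrS⟩) := rfl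
        _ ≤ x ⬝ᵥ ((msub S (C n)) *ᵥ x) := h1
        _ = 1 / K n r r := h2.trans h3
    · have h := (main n Nr hrNr).1
      simpa using h
  have hVT : V T = (1/(N:ℝ)) * ∑ n, vr n T := hVeq T hrT
  have hVNr : V Nr = (1/(N:ℝ)) * ∑ n, 1 / K n r r := by
    rw [hVeq Nr hrNr]
    congr 1
    exact Finset.sum_congr rfl fun n _ => hvrNr n
  by_cases hsub : Nr ⊆ T
  · have hss : Nr ⊂ T := lt_of_le_of_ne hsub (fun h => hTne h.symm)
    have hcard : Nr.card < T.card := Finset.card_lt_card hss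
    have hVle : V Nr ≤ V T := by
      rw [hVT, hVNr]
      apply mul_le_mul_of_nonneg_left _ hNpos.le
      apply Finset.sum_le_sum
      intro n _
      have h := (main n T hrT).1
      have hempty : Nr \ T = ∅ := Finset.sdiff_eq_empty_iff_subset.mpr hsub
      rw [hempty] at h
      simpa using h
    have hlt : ρmin * Nr.card < ρmin * T.card := by
      apply mul_lt_mul_of_pos_left _ hρmin
      exact_mod_cast hcard
    linarith
  · obtain ⟨b₀, hb₀Nr, hb₀T⟩ := Finset.not_subset.mp hsub
    have hb₀ : b₀ ∈ Nr \ T := Finset.mem_sdiff.mpr ⟨hb₀Nr, hb₀T⟩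
    obtain ⟨n₀, hn₀⟩ : ∃ n, K n r b₀ ≠ 0 := by
      have h := hb₀Nr
      rw [hNr] at h
      exact (Finset.mem_filter.mp h).2.2
    have hsumlt : ∑ n, (1 / K n r r + α n * ∑ b ∈ Nr \ T, (K n r b / K n r r) ^ 2)
        < ∑ n, vr n T := by
      apply Finset.sum_lt_sum (fun n _ => (main n T hrT).1)
      exact ⟨n₀, Finset.mem_univ n₀, (main n₀ T hrT).2 b₀ hb₀ hn₀⟩
    have hsplit : (1/(N:ℝ)) * ∑ n, (1 / K n r r + α n * ∑ b ∈ Nr \ T, (K n r b / K n r r) ^ 2)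
        = V Nr + ∑ b ∈ Nr \ T, ((1:ℝ)/N) * ∑ n, α n * (K n r b / K n r r) ^ 2 := by
      rw [Finset.sum_add_distrib, mul_add, hVNr]
      congr 1
      have h1 : ∀ n, α n * ∑ b ∈ Nr \ T, (K n r b / K n r r) ^ 2
          = ∑ b ∈ Nr \ T, α n * (K n r b / K n r r) ^ 2 := fun n => Finset.mul_sum _ _ _
      simp_rw [h1]
      rw [Finset.sum_comm, Finset.mul_sum]
    have hρ : ∀ b ∈ Nr \ T, ρmin ≤ ((1:ℝ)/N) * ∑ n, α n * (K n r b / K n r r) ^ 2 := by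
      intro b hb
      obtain ⟨hbNr, _⟩ := Finset.mem_sdiff.mp hb
      rw [hNr] at hbNr
      obtain ⟨-, hbr, hex⟩ := Finset.mem_filter.mp hbNr
      exact hpc r b (Ne.symm hbr) hex
    have hlower : ((Nr \ T).card : ℝ) * ρmin
        ≤ ∑ b ∈ Nr \ T, ((1:ℝ)/N) * ∑ n, α n * (K n r b / K n r r) ^ 2 := by
      have h := Finset.card_nsmul_le_sum (Nr \ T)
        (fun b => ((1:ℝ)/N) * ∑ n, α n * (K n r b / K n r r) ^ 2) ρmin hρ
      simpa [nsmul_eq_mul] using h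
    have hVlt : V Nr + ((Nr \ T).card : ℝ) * ρmin < V T := by
      rw [hVT]
      have h9 := mul_lt_mul_of_pos_left hsumlt hNpos
      rw [hsplit] at h9
      linarith
    have hcards : (Nr.card : ℝ) ≤ ((Nr \ T).card : ℝ) + T.card := by
      have h10 := Finset.card_sdiff_add_card_inter Nr T
      have h11 : (Nr ∩ T).card ≤ T.card := Finset.card_le_card Finset.inter_subset_right
      have h12 : Nr.card ≤ (Nr \ T).card + T.card := by omega
      exact_mod_cast h12
    have h13 := mul_le_mul_of_nonneg_left hcards hρmin.le
    nlinarith [h13, hVlt]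
end

section
/- Let C be a symmetric positive definite m×m matrix with α ≤ λ_min(C), and K = C⁻¹. Fix indices r ≠ j. Let Q be an index set with r, j ∉ Q and such that K_{r,t} = 0 for all t ∉ Q ∪ {r, j}. Then the conditional variance of x_r given {x_t}_{t∈Q} (for x ~ N(0,C)) satisfies var(x_r | {x_t}_{t∈Q}) ≥ α (K_{r,j}/K_{r,r})² + 1/K_{r,r}. -/
open Matrix

private lemma sum_dite_mem {m : ℕ} (Q : Finset (Fin m)) (F : (t : Fin m) → t ∈ Q → ℝ) :
    ∑ t, (if h : t ∈ Q then F t h else 0) = ∑ i : Q, F i i.2 := by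
  classical
  calc ∑ t, (if h : t ∈ Q then F t h else 0)
      = ∑ t ∈ Q, (if h : t ∈ Q then F t h else 0) :=
        (Finset.sum_subset (Finset.subset_univ Q) fun t _ ht => dif_neg ht).symm
    _ = ∑ i ∈ Q.attach, (if h : (↑i : Fin m) ∈ Q then F ↑i h else 0) :=
        (Finset.sum_attach Q _).symm
    _ = ∑ i : Q, F i i.2 := by
        rw [← Finset.univ_eq_attach]
        exact Finset.sum_congr rfl fun i _ => dif_pos i.2

/-- Key inequality: if the Markov neighborhood of `r` is contained in `Q ∪ {j}`
(i.e. `K_{r,t} = 0` for all `t ∉ Q ∪ {r,j}`), and `λ_min(C) ≥ α > 0`, then the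
conditional variance of `x_r` given `{x_t}_{t ∈ Q}` (the Schur complement) satisfies
`var(x_r | Q) ≥ α (K_{r,j}/K_{r,r})² + 1/K_{r,r}`. -/
theorem cond_variance_lower_bound_missing_one {m : ℕ}
    (C : Matrix (Fin m) (Fin m) ℝ) (hC : C.PosDef)
    (α : ℝ) (hα : 0 < α)
    (heig : (C - α • (1 : Matrix (Fin m) (Fin m) ℝ)).PosSemidef)
    (K : Matrix (Fin m) (Fin m) ℝ) (hK : K = C⁻¹)
    (r j : Fin m) (hrj : r ≠ j)
    (Q : Finset (Fin m)) (hrQ : r ∉ Q) (hjQ : j ∉ Q)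
    (hmarkov : ∀ t, t ∉ Q → t ≠ r → t ≠ j → K r t = 0) :
    α * (K r j / K r r) ^ 2 + 1 / K r r
      ≤ C r r - ∑ i : Q, ∑ j' : Q,
          C r i * ((Matrix.of fun i j' : Q => C i j')⁻¹ i j') * C j' r := by
  classical
  have hCsymm : Cᵀ = C := hC.isHermitian
  have hCs : ∀ a b, C a b = C b a := fun a b => by
    have := congrFun (congrFun hCsymm b) a
    simpa [transpose_apply] using this
  set A : Matrix Q Q ℝ := Matrix.of fun i j' : Q => C i j' with hA
  -- A is positive definite
  have hApd : A.PosDef := by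
    refine Matrix.PosDef.of_dotProduct_mulVec_pos ?_ ?_
    · ext i k
      simp only [conjTranspose_apply, hA, Matrix.of_apply, star_trivial]
      exact hCs _ _
    · intro x hx
      set y : Fin m → ℝ := fun t => if h : t ∈ Q then x ⟨t, h⟩ else 0 with hy
      have hyne : y ≠ 0 := by
        intro h0
        apply hx
        funext i
        have := congrFun h0 (i : Fin m)
        simpa [hy, dif_pos i.2] using this
      have hpos := hC.dotProduct_mulVec_pos hyne
      have hform : star y ⬝ᵥ C *ᵥ y = star x ⬝ᵥ A *ᵥ x := by
        simp only [star_trivial, dotProduct, mulVec]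
        have h1 : ∀ s : Fin m, y s * (∑ t, C s t * y t)
            = if h : s ∈ Q then x ⟨s, h⟩ * (∑ i : Q, C s i * x i) else 0 := by
          intro s
          by_cases h : s ∈ Q
          · rw [dif_pos h]
            have h2 : (∑ t, C s t * y t) = ∑ i : Q, C s i * x i := by
              rw [← sum_dite_mem Q (fun t ht => C s t * x ⟨t, ht⟩)]
              exact Finset.sum_congr rfl fun t _ => by
                by_cases ht : t ∈ Q <;> simp [hy, ht]
            rw [h2]
            simp [hy, h]
          · simp [hy, dif_neg h]
        rw [Finset.sum_congr rfl fun s _ => h1 s, sum_dite_mem Q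
          (fun s hs => x ⟨s, hs⟩ * (∑ i : Q, C s i * x i))]
        exact Finset.sum_congr rfl fun i _ => by simp [hA, mulVec, dotProduct]
      rw [← hform]
      exact hpos
  have hAdet : IsUnit A.det := hApd.det_pos.ne'.isUnit
  have hAAinv : A * A⁻¹ = 1 := mul_nonsing_inv A hAdet
  -- vectors
  set v : Q → ℝ := fun i => C i r with hv
  set u : Q → ℝ := A⁻¹ *ᵥ v with hu
  set T : ℝ := ∑ i : Q, ∑ j' : Q, C r i * (A⁻¹ i j') * C j' r with hT
  have hTvu : T = v ⬝ᵥ u := by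
    rw [hT, hu]
    simp only [dotProduct, mulVec, hv, Finset.mul_sum]
    refine Finset.sum_congr rfl fun i _ => Finset.sum_congr rfl fun j' _ => ?_
    rw [hCs r i]
    ring
  -- the minimizer z and its quadratic form
  set e : Fin m → ℝ := Pi.single r 1 with he
  set y : Fin m → ℝ := fun t => if h : t ∈ Q then u ⟨t, h⟩ else 0 with hy
  set z : Fin m → ℝ := e - y with hz
  have hedp : ∀ x : Fin m → ℝ, e ⬝ᵥ x = x r := by
    intro x; simp [he, dotProduct, Pi.single_apply]
  have hy_sum₁ : ∀ g : Fin m → ℝ, (∑ t, g t * y t) = ∑ i : Q, g i * u i := by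
    intro g
    rw [← sum_dite_mem Q (fun t ht => g t * u ⟨t, ht⟩)]
    exact Finset.sum_congr rfl fun t _ => by by_cases ht : t ∈ Q <;> simp [hy, ht]
  have hy_sum₂ : ∀ g : Fin m → ℝ, (∑ t, y t * g t) = ∑ i : Q, u i * g i := by
    intro g
    rw [← sum_dite_mem Q (fun t ht => u ⟨t, ht⟩ * g t)]
    exact Finset.sum_congr rfl fun t _ => by by_cases ht : t ∈ Q <;> simp [hy, ht]
  have hAu : A *ᵥ u = v := by
    rw [hu, mulVec_mulVec, hAAinv, one_mulVec]
  have hvuT : (∑ i : Q, C r i * u i) = T := by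
    rw [hTvu]
    simp only [dotProduct, hv]
    exact Finset.sum_congr rfl fun i _ => by rw [hCs r i]
  have hT1 : e ⬝ᵥ (C *ᵥ y) = T := by
    rw [hedp]
    show (∑ t, C r t * y t) = T
    rw [hy_sum₁ (fun t => C r t)]
    exact hvuT
  have hCe : ∀ t, (C *ᵥ e) t = C t r := by
    intro t; simp [he, mulVec, dotProduct, Pi.single_apply]
  have hT2 : y ⬝ᵥ (C *ᵥ e) = T := by
    have step : y ⬝ᵥ (C *ᵥ e) = ∑ t, y t * C t r := by
      simp only [dotProduct]
      exact Finset.sum_congr rfl fun t _ => by rw [hCe t]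
    rw [step, hy_sum₂ (fun t => C t r)]
    have : (∑ i : Q, u i * C i r) = u ⬝ᵥ v := by
      simp only [dotProduct, hv]
    rw [this, dotProduct_comm, ← hTvu]
  have hT3 : y ⬝ᵥ (C *ᵥ y) = T := by
    have hinner : ∀ s, (C *ᵥ y) s = ∑ i : Q, C s i * u i := by
      intro s
      show (∑ t, C s t * y t) = _
      exact hy_sum₁ (fun t => C s t)
    have step : y ⬝ᵥ (C *ᵥ y) = ∑ t, y t * (∑ i : Q, C t i * u i) := by
      simp only [dotProduct]
      exact Finset.sum_congr rfl fun t _ => by rw [hinner t]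
    rw [step, hy_sum₂ (fun t => ∑ i : Q, C t i * u i)]
    have step2 : (∑ i : Q, u i * (∑ k : Q, C i k * u k)) = u ⬝ᵥ (A *ᵥ u) := by
      simp only [dotProduct, mulVec, hA, Matrix.of_apply]
    rw [step2, hAu, dotProduct_comm, ← hTvu]
  have hzCz : z ⬝ᵥ (C *ᵥ z) = C r r - T := by
    rw [hz, mulVec_sub, sub_dotProduct, dotProduct_sub, dotProduct_sub]
    have h00 : e ⬝ᵥ (C *ᵥ e) = C r r := by
      rw [hedp, hCe]
    rw [h00, hT1, hT2, hT3]
    ring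
  -- properties of K
  have hKpd : K.PosDef := hK ▸ hC.inv
  have hKrr : 0 < K r r := by
    have hne : (Pi.single r 1 : Fin m → ℝ) ≠ 0 := by
      intro h; simpa using congrFun h r
    have := hKpd.dotProduct_mulVec_pos hne
    simpa [dotProduct, mulVec, Pi.single_apply, Finset.mul_sum] using this
  have hKsym : ∀ a b, K a b = K b a := by
    intro a b
    have hKt : Kᵀ = K := by
      rw [hK, transpose_nonsing_inv, hCsymm]
    have := congrFun (congrFun hKt b) a
    simpa [transpose_apply] using this
  have hCK : C * K = 1 := by
    rw [hK]; exact mul_nonsing_inv C hC.det_pos.ne'.isUnit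
  set w : Fin m → ℝ := fun t => K t r / K r r with hw
  have hCw : ∀ t, (C *ᵥ w) t = (if t = r then (1:ℝ) else 0) / K r r := by
    intro t
    show (∑ s, C t s * (K s r / K r r)) = _
    rw [show (∑ s, C t s * (K s r / K r r)) = (∑ s, C t s * K s r) / K r r by
      rw [Finset.sum_div]; exact Finset.sum_congr rfl fun s _ => (mul_div_assoc _ _ _).symm]
    congr 1
    calc (∑ s, C t s * K s r) = (C * K) t r := (mul_apply).symm
      _ = (1 : Matrix (Fin m) (Fin m) ℝ) t r := by rw [hCK]
      _ = if t = r then 1 else 0 := by simp [one_apply]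
  have hpCw : ∀ p : Fin m → ℝ, p ⬝ᵥ (C *ᵥ w) = p r / K r r := by
    intro p
    have step : p ⬝ᵥ (C *ᵥ w) = ∑ t, p t * ((if t = r then (1:ℝ) else 0) / K r r) := by
      simp only [dotProduct]
      exact Finset.sum_congr rfl fun t _ => by rw [hCw t]
    rw [step]
    simp [mul_div_assoc, Finset.sum_ite_eq', mul_ite, div_eq_mul_inv]
  have hsymm_dp : ∀ p q : Fin m → ℝ, p ⬝ᵥ (C *ᵥ q) = q ⬝ᵥ (C *ᵥ p) := by
    intro p q
    rw [dotProduct_mulVec]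
    have hpC : p ᵥ* C = C *ᵥ p := by
      nth_rewrite 1 [← hCsymm]
      exact vecMul_transpose _ _
    rw [hpC, dotProduct_comm]
  set d : Fin m → ℝ := z - w with hd
  have hzr : z r = 1 := by
    simp [hz, he, hy, Pi.single_apply, dif_neg hrQ]
  have hwr : w r = 1 := div_self hKrr.ne'
  have hdr : d r = 0 := by
    simp only [hd, Pi.sub_apply, hzr, hwr, sub_self]
  have hdj : d j = -(K r j / K r r) := by
    have hzj : z j = 0 := by
      simp [hz, he, hy, Pi.single_apply, (Ne.symm hrj), dif_neg hjQ]
    have hwj : w j = K r j / K r r := by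
      simp only [hw]; rw [hKsym j r]
    simp [hd, hzj, hwj]
  have hzwd : z = w + d := by rw [hd]; abel
  -- quadratic form expansion
  have hwCw : w ⬝ᵥ (C *ᵥ w) = 1 / K r r := by
    rw [hpCw w, hwr]
  have hdCw : d ⬝ᵥ (C *ᵥ w) = 0 := by
    rw [hpCw d, hdr, zero_div]
  have hwCd : w ⬝ᵥ (C *ᵥ d) = 0 := by
    rw [hsymm_dp w d, hdCw]
  have hquad : z ⬝ᵥ (C *ᵥ z) = 1 / K r r + d ⬝ᵥ (C *ᵥ d) := by
    nth_rewrite 1 [hzwd]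
    nth_rewrite 1 [hzwd]
    rw [mulVec_add, add_dotProduct, dotProduct_add, dotProduct_add,
      hwCw, hdCw, hwCd]
    ring
  -- lower bound on d C d
  have hdCd : α * (d ⬝ᵥ d) ≤ d ⬝ᵥ (C *ᵥ d) := by
    have hps := heig.dotProduct_mulVec_nonneg d
    rw [star_trivial, sub_mulVec, smul_mulVec, one_mulVec,
      dotProduct_sub, dotProduct_smul, smul_eq_mul] at hps
    linarith
  have hdd : (K r j / K r r) ^ 2 ≤ d ⬝ᵥ d := by
    have hle : d j * d j ≤ ∑ t, d t * d t :=
      Finset.single_le_sum (fun i _ => mul_self_nonneg (d i)) (Finset.mem_univ j)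
    have heq : d j * d j = (K r j / K r r) ^ 2 := by
      rw [hdj]; ring
    calc (K r j / K r r) ^ 2 = d j * d j := heq.symm
      _ ≤ ∑ t, d t * d t := hle
      _ = d ⬝ᵥ d := rfl
  have hfinal : α * (K r j / K r r) ^ 2 + 1 / K r r ≤ z ⬝ᵥ (C *ᵥ z) := by
    rw [hquad]
    have h1 : α * (K r j / K r r) ^ 2 ≤ α * (d ⬝ᵥ d) :=
      mul_le_mul_of_nonneg_left hdd hα.le
    linarith
  calc α * (K r j / K r r) ^ 2 + 1 / K r r ≤ z ⬝ᵥ (C *ᵥ z) := hfinal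
    _ = C r r - T := hzCz
    _ = C r r - ∑ i : Q, ∑ j' : Q, C r i * (A⁻¹ i j') * C j' r := by rw [hT]
end
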